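/- In the formal power series ring ℂ[[T,z]], the identity (∑_{n≥1} (A_n(T)/(1-T)^n) · z^n/n!) · (1 - T·e^z) = e^z - 1 holds, where e^z denotes the formal exponential. -/

import Mathlib

open PowerSeries

open Finset in

lemma exp_binom (a : ℂ) (n : ℕ) :
    ∑ p ∈ Finset.HasAntidiagonal.antidiagonal n, a ^ p.1 * (p.1.factorial : ℂ)⁻¹ * (p.2.factorial : ℂ)⁻¹
      = (a + 1) ^ n * (n.factorial : ℂ)⁻¹ := by
  rw [Finset.Nat.sum_antidiagonal_eq_sum_range_succ_mk, add_pow, Finset.sum_mul]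
  refine Finset.sum_congr rfl fun j hj => ?_
  rw [Finset.mem_range, Nat.lt_succ_iff] at hj
  rw [one_pow, mul_one]
  have h := Nat.choose_mul_factorial_mul_factorial hj
  have hj1 : (j.factorial : ℂ) ≠ 0 := Nat.cast_ne_zero.2 (Nat.factorial_ne_zero _)
  have hj2 : ((n - j).factorial : ℂ) ≠ 0 := Nat.cast_ne_zero.2 (Nat.factorial_ne_zero _)
  have hn : (n.factorial : ℂ) ≠ 0 := Nat.cast_ne_zero.2 (Nat.factorial_ne_zero _)
  field_simp
  rw [← h]
  push_cast
  ring

noncomputable def cc (j m : ℕ) : ℂ :=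
  if j = 0 then 0 else (j.factorial : ℂ)⁻¹ * (((m : ℂ) + 1) ^ j - (m : ℂ) ^ j)

lemma cc_eq (j m : ℕ) :
    cc j m = ((m : ℂ) + 1) ^ j * (j.factorial : ℂ)⁻¹ - (m : ℂ) ^ j * (j.factorial : ℂ)⁻¹ := by
  unfold cc
  split
  · subst ‹j = 0›; simp
  · ring

lemma sum_cc (n m : ℕ) :
    ∑ p ∈ Finset.HasAntidiagonal.antidiagonal n, cc p.1 m * (p.2.factorial : ℂ)⁻¹ = cc n (m + 1) := by
  have : ∀ p ∈ Finset.HasAntidiagonal.antidiagonal n, cc p.1 m * (p.2.factorial : ℂ)⁻¹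
      = ((m : ℂ) + 1) ^ p.1 * (p.1.factorial : ℂ)⁻¹ * (p.2.factorial : ℂ)⁻¹
        - (m : ℂ) ^ p.1 * (p.1.factorial : ℂ)⁻¹ * (p.2.factorial : ℂ)⁻¹ := by
    intro p _; rw [cc_eq]; ring
  rw [Finset.sum_congr rfl this, Finset.sum_sub_distrib, exp_binom, exp_binom, cc_eq]
  push_cast; ring

lemma coeff_f (n m : ℕ) :
    (PowerSeries.coeff m) (if n = 0 then 0 else
        ((n.factorial : ℂ)⁻¹) • ((1 - X) * PowerSeries.mk (fun k => ((k : ℂ) + 1) ^ n)))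
      = cc n m := by
  unfold cc
  split
  · simp
  · rename_i hn
    rw [map_smul, smul_eq_mul, sub_mul, one_mul, map_sub]
    congr 1
    cases m with
    | zero => simp [coeff_zero_X_mul, zero_pow hn]
    | succ m => rw [coeff_mk, coeff_succ_X_mul, coeff_mk]; push_cast; ring

/-- In `ℂ[[T]][[z]]` (representing `ℂ[[T,z]]`), with `A_n(T)/(1-T)^n` interpreted as
`(1-T)·∑_{k≥1} k^n T^{k-1}`, we have
`(∑_{n≥1} (A_n(T)/(1-T)^n) z^n/n!) · (1 - T·e^z) = e^z - 1`. -/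
theorem eulerian_genfun :
    (PowerSeries.mk (fun n => if n = 0 then 0 else
        ((n.factorial : ℂ)⁻¹) • ((1 - X) * PowerSeries.mk (fun k => ((k : ℂ) + 1) ^ n)))
        : PowerSeries (PowerSeries ℂ))
      * (1 - PowerSeries.C (R := PowerSeries ℂ) X
          * PowerSeries.mk (fun n => PowerSeries.C (R := ℂ) ((n.factorial : ℂ)⁻¹)))
    = PowerSeries.mk (fun n => PowerSeries.C (R := ℂ) ((n.factorial : ℂ)⁻¹)) - 1 := by
  set F : PowerSeries (PowerSeries ℂ) := PowerSeries.mk (fun n => if n = 0 then 0 else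
      ((n.factorial : ℂ)⁻¹) • ((1 - X) * PowerSeries.mk (fun k => ((k : ℂ) + 1) ^ n))) with hF
  set E : PowerSeries (PowerSeries ℂ) :=
      PowerSeries.mk (fun n => PowerSeries.C (R := ℂ) ((n.factorial : ℂ)⁻¹)) with hE
  have hL : F * (1 - PowerSeries.C (R := PowerSeries ℂ) X * E)
      = F - PowerSeries.C (R := PowerSeries ℂ) X * (F * E) := by ring
  rw [hL]
  refine PowerSeries.ext fun n => ?_
  rw [map_sub, map_sub, coeff_C_mul, coeff_mul]
  refine PowerSeries.ext fun m => ?_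
  rw [map_sub, map_sub]
  have hsum : (PowerSeries.coeff m) (X * ∑ p ∈ Finset.HasAntidiagonal.antidiagonal n,
      (PowerSeries.coeff p.1 F) * (PowerSeries.coeff p.2 E))
      = if m = 0 then 0 else cc n m := by
    cases m with
    | zero => simp [coeff_zero_X_mul]
    | succ m =>
      rw [coeff_succ_X_mul, map_sum, if_neg (Nat.succ_ne_zero m)]
      rw [show cc n (m + 1) = ∑ p ∈ Finset.HasAntidiagonal.antidiagonal n, cc p.1 m * (p.2.factorial : ℂ)⁻¹
        from (sum_cc n m).symm]
      refine Finset.sum_congr rfl fun p _ => ?_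
      rw [hF, hE, coeff_mk, coeff_mk, coeff_mul_C, coeff_f]
  rw [hsum, hF, coeff_mk, coeff_f]
  rw [hE, coeff_mk, coeff_one, coeff_C]
  by_cases hm : m = 0 <;> by_cases hn : n = 0 <;> simp [hm, hn, cc, Nat.factorial_ne_zero]
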